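/- Define B : ℕ → ℚ by B(-1)=0, B(0)=1, B(n)=B(n-1)+(1/n)B(n-2) for n≥1. Then B(n) = (n+2) · ∑_{i=2}^{n+2} (-1)^i / i! for all n≥0. -/

import Mathlib

theorem stmt3 (B : ℤ → ℚ)
    (hB1 : B (-1) = 0) (hB0 : B 0 = 1)
    (hBrec : ∀ n : ℤ, 1 ≤ n → B n = B (n - 1) + (1 / (n : ℚ)) * B (n - 2)) :
    ∀ n : ℕ, B (n : ℤ) = ((n : ℚ) + 2) *
      ∑ i ∈ Finset.Icc 2 (n + 2), (-1 : ℚ) ^ i / (Nat.factorial i : ℚ) := by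
  have key : ∀ m : ℕ,
      (B (m : ℤ) = ((m : ℚ) + 2) * ∑ i ∈ Finset.Icc 2 (m + 2), (-1 : ℚ) ^ i / (Nat.factorial i : ℚ)) ∧
      (B ((m : ℤ) + 1) = ((m : ℚ) + 3) * ∑ i ∈ Finset.Icc 2 (m + 3), (-1 : ℚ) ^ i / (Nat.factorial i : ℚ)) := by
    intro m
    induction m with
    | zero =>
      constructor
      · norm_num [hB0, Finset.sum_Icc_succ_top, Nat.factorial]
      · have h := hBrec 1 le_rfl
        norm_num at h
        rw [hB0, hB1] at h
        norm_num [h]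
        rw [show (3:ℕ) = 2 + 1 by rfl, Finset.sum_Icc_succ_top (by norm_num)]
        norm_num [Nat.factorial]
    | succ k ih =>
      have h1 := ih.1
      have h2 := ih.2
      refine ⟨by push_cast; exact_mod_cast h2, ?_⟩
      have h := hBrec ((k : ℤ) + 2) (by omega)
      rw [show ((k:ℤ)+2)-1 = (k:ℤ)+1 by ring, show ((k:ℤ)+2)-2 = (k:ℤ) by ring] at h
      rw [h1, h2] at h
      push_cast
      rw [show ((k:ℤ)+1)+1 = (k:ℤ)+2 by ring, h]
      rw [show k + 1 + 3 = (k + 3) + 1 by ring,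
        Finset.sum_Icc_succ_top (by omega : 2 ≤ k + 3 + 1),
        show k + 3 = (k + 2) + 1 by ring,
        Finset.sum_Icc_succ_top (by omega : 2 ≤ k + 2 + 1)]
      have hf3 : (Nat.factorial (k + 2 + 1) : ℚ) = ((k:ℚ) + 3) * Nat.factorial (k + 2) := by
        push_cast [Nat.factorial_succ]; ring
      have hf4 : (Nat.factorial (k + 2 + 1 + 1) : ℚ) = ((k:ℚ) + 4) * (((k:ℚ) + 3) * Nat.factorial (k + 2)) := by
        push_cast [Nat.factorial_succ]; ring
      have hne : (Nat.factorial (k + 2) : ℚ) ≠ 0 := by positivity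
      have hk2 : ((k:ℚ) + 2) ≠ 0 := by positivity
      have hk3 : ((k:ℚ) + 3) ≠ 0 := by positivity
      have hk4 : ((k:ℚ) + 4) ≠ 0 := by positivity
      rw [hf3, hf4, pow_succ, pow_succ]
      push_cast
      field_simp
      ring
  intro n
  exact (key n).1
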